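/- Local convergence from one-step contraction and small steps: let E and Y be finite-dimensional real inner product spaces, (x_k) a sequence in E, (z_k) a sequence in Y, x* ∈ E, z* ∈ Y, and constants C > 0, ε > 0, r > 0, q ∈ (0,1) such that: (i) for every k, ‖x_k − x_{k+1}‖ ≤ C·‖z_k − z*‖^{1/2}; and (ii) for every k, if ‖x_k − x*‖ ≤ ε, ‖x_{k+1} − x*‖ ≤ ε, and ‖z_k − z*‖ ≤ r, then ‖z_{k+1} − z*‖ ≤ q·‖z_k − z*‖. If ‖x₀ − x*‖ ≤ ε/2 and ‖z₀ − z*‖ ≤ min{((1 − √q)·ε/(2C))², r}, then for every k ≥ 0, ‖x_k − x*‖ ≤ ε and ‖z_k − z*‖ ≤ ‖z₀ − z*‖·q^k. -/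

import Mathlib

lemma sqrt_pow_aux (q : ℝ) (hq : 0 ≤ q) (k : ℕ) :
    Real.sqrt (q ^ k) = Real.sqrt q ^ k := by
  rw [show q ^ k = (Real.sqrt q ^ k) ^ 2 by
    rw [← pow_mul, mul_comm, pow_mul, Real.sq_sqrt hq],
    Real.sqrt_sq (pow_nonneg (Real.sqrt_nonneg q) k)]

/-- Local convergence from one-step contraction and small steps. -/
theorem local_convergence_from_contraction
    {E Y : Type*} [NormedAddCommGroup E] [InnerProductSpace ℝ E] [FiniteDimensional ℝ E]
    [NormedAddCommGroup Y] [InnerProductSpace ℝ Y] [FiniteDimensional ℝ Y]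
    (x : ℕ → E) (z : ℕ → Y) (xs : E) (zs : Y) (C ε r q : ℝ)
    (hC : 0 < C) (hε : 0 < ε) (hr : 0 < r) (hq0 : 0 < q) (hq1 : q < 1)
    (hstep : ∀ k : ℕ, ‖x k - x (k + 1)‖ ≤ C * Real.sqrt ‖z k - zs‖)
    (hcontract : ∀ k : ℕ, ‖x k - xs‖ ≤ ε → ‖x (k + 1) - xs‖ ≤ ε → ‖z k - zs‖ ≤ r →
      ‖z (k + 1) - zs‖ ≤ q * ‖z k - zs‖)
    (hx0 : ‖x 0 - xs‖ ≤ ε / 2)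
    (hz0 : ‖z 0 - zs‖ ≤ min (((1 - Real.sqrt q) * ε / (2 * C)) ^ 2) r) :
    ∀ k : ℕ, ‖x k - xs‖ ≤ ε ∧ ‖z k - zs‖ ≤ ‖z 0 - zs‖ * q ^ k := by
  set Z := ‖z 0 - zs‖ with hZdef
  set s := Real.sqrt q with hsdef
  have hs0 : 0 ≤ s := Real.sqrt_nonneg q
  have hs1 : s < 1 := by
    rw [hsdef, show (1:ℝ) = Real.sqrt 1 by simp]
    exact Real.sqrt_lt_sqrt hq0.le hq1
  have h1s : 0 < 1 - s := by linarith
  have hZ0 : 0 ≤ Z := norm_nonneg _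
  have hZr : Z ≤ r := hz0.trans (min_le_right _ _)
  have hZsq : Z ≤ ((1 - s) * ε / (2 * C)) ^ 2 := hz0.trans (min_le_left _ _)
  have hbase : 0 ≤ (1 - s) * ε / (2 * C) := by positivity
  have hsZ : Real.sqrt Z ≤ (1 - s) * ε / (2 * C) := by
    calc Real.sqrt Z ≤ Real.sqrt (((1 - s) * ε / (2 * C)) ^ 2) := Real.sqrt_le_sqrt hZsq
    _ = (1 - s) * ε / (2 * C) := Real.sqrt_sq hbase
  -- key geometric bound
  have key : ∀ n : ℕ, C * Real.sqrt Z * ∑ j ∈ Finset.range n, s ^ j ≤ ε / 2 := by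
    intro n
    have hsum : ∑ j ∈ Finset.range n, s ^ j ≤ 1 / (1 - s) := by
      rw [geom_sum_eq (by linarith : s ≠ 1), ← neg_div_neg_eq, neg_sub, neg_sub]
      have hn : 0 ≤ s ^ n := pow_nonneg hs0 n
      gcongr
      linarith
    calc C * Real.sqrt Z * ∑ j ∈ Finset.range n, s ^ j
        ≤ C * ((1 - s) * ε / (2 * C)) * (1 / (1 - s)) := by
          apply mul_le_mul (mul_le_mul_of_nonneg_left hsZ hC.le) hsum
            (Finset.sum_nonneg fun j _ => pow_nonneg hs0 j)
            (by positivity)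
      _ = ε / 2 := by field_simp
  have main : ∀ k : ℕ,
      (‖x k - xs‖ ≤ ε / 2 + C * Real.sqrt Z * ∑ j ∈ Finset.range k, s ^ j) ∧
      ‖z k - zs‖ ≤ Z * q ^ k := by
    intro k
    induction k with
    | zero => simpa [hZdef] using hx0
    | succ k ih =>
      obtain ⟨ihx, ihz⟩ := ih
      have hsqz : Real.sqrt ‖z k - zs‖ ≤ Real.sqrt Z * s ^ k := by
        calc Real.sqrt ‖z k - zs‖ ≤ Real.sqrt (Z * q ^ k) := Real.sqrt_le_sqrt ihz
        _ = Real.sqrt Z * s ^ k := by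
            rw [Real.sqrt_mul hZ0, sqrt_pow_aux q hq0.le k]
      have hxk1 : ‖x (k + 1) - xs‖ ≤ ε / 2 + C * Real.sqrt Z * ∑ j ∈ Finset.range (k+1), s ^ j := by
        calc ‖x (k + 1) - xs‖ ≤ ‖x k - xs‖ + ‖x k - x (k + 1)‖ := by
              have := norm_sub_le (x k - xs) (x k - x (k+1))
              simpa [sub_sub_sub_cancel_left] using this
        _ ≤ (ε / 2 + C * Real.sqrt Z * ∑ j ∈ Finset.range k, s ^ j)
              + C * (Real.sqrt Z * s ^ k) := by
            refine add_le_add ihx ((hstep k).trans ?_)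
            exact mul_le_mul_of_nonneg_left hsqz hC.le
        _ = ε / 2 + C * Real.sqrt Z * ∑ j ∈ Finset.range (k+1), s ^ j := by
            rw [Finset.sum_range_succ]; ring
      refine ⟨hxk1, ?_⟩
      have hzk1 : ‖z (k + 1) - zs‖ ≤ q * ‖z k - zs‖ := by
        apply hcontract k
        · exact ihx.trans (by linarith [key k])
        · exact hxk1.trans (by linarith [key (k+1)])
        · exact ihz.trans (le_trans (by nlinarith [pow_le_one₀ hq0.le hq1.le (n := k)]) hZr)
      calc ‖z (k + 1) - zs‖ ≤ q * (Z * q ^ k) :=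
            hzk1.trans (mul_le_mul_of_nonneg_left ihz hq0.le)
        _ = Z * q ^ (k + 1) := by ring
  intro k
  obtain ⟨hx, hz⟩ := main k
  exact ⟨hx.trans (by linarith [key k]), hz⟩
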